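/- arXiv:0810.0184 — 2 statements merged into one kernel-verified Lean document; each statement's English description precedes it below -/
import Mathlib

section
/- Dunkl-type realization of A_λ on ℂ[z]: for every λ ∈ ℂ, the ℂ-linear endomorphisms ρ₊ = (1/2)D − λΔ, ρ₋ = −(1/2)M_z, and P of Polynomial ℂ satisfy ρ₊ ∘ ρ₋ − ρ₋ ∘ ρ₊ = −(1/4)·id + λ·P, ρ₊ ∘ P = −P ∘ ρ₊, ρ₋ ∘ P = −P ∘ ρ₋, and P ∘ P = id (so they define a representation of A_λ on ℂ[z]). -/
noncomputable section

open Polynomial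

/-- The multiplication-by-`z` operator `M_z` on `ℂ[z]`. -/
def Mz : Module.End ℂ (Polynomial ℂ) := LinearMap.mulLeft ℂ (X : Polynomial ℂ)

/-- The derivative operator `D` on `ℂ[z]`. -/
def Dop : Module.End ℂ (Polynomial ℂ) :=
  (Polynomial.derivative : Polynomial ℂ →ₗ[ℂ] Polynomial ℂ)

/-- The parity operator `P` on `ℂ[z]`: the algebra map `z ↦ −z`,
i.e. `h(z) ↦ h(−z)`, viewed as a ℂ-linear endomorphism. -/
def Pop : Module.End ℂ (Polynomial ℂ) :=
  (Polynomial.aeval (-(X : Polynomial ℂ)) :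
    Polynomial ℂ →ₐ[ℂ] Polynomial ℂ).toLinearMap

/-- The operator `Δ : h ↦ (h(z) − h(−z))/z` on `ℂ[z]`. -/
def DeltaOp : Module.End ℂ (Polynomial ℂ) where
  toFun h := (h - h.comp (-(X : Polynomial ℂ))).divX
  map_add' h g := by
    show ((h + g) - (h + g).comp (-(X : Polynomial ℂ))).divX = _
    rw [Polynomial.add_comp, add_sub_add_comm, Polynomial.divX_add]
  map_smul' c h := by
    show ((c • h) - (c • h).comp (-(X : Polynomial ℂ))).divX = _
    rw [Polynomial.smul_comp, ← smul_sub, Polynomial.smul_eq_C_mul,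
      Polynomial.divX_C_mul, ← Polynomial.smul_eq_C_mul]
    rfl

/-- The operator `ρ₊ = (1/2)D − λΔ`. -/
def rhoP (lam : ℂ) : Module.End ℂ (Polynomial ℂ) :=
  (1 / 2 : ℂ) • Dop - lam • DeltaOp

/-- The operator `ρ₋ = −(1/2)M_z`. -/
def rhoM : Module.End ℂ (Polynomial ℂ) := -((1 / 2 : ℂ) • Mz)

end


section Aux
open Polynomial

lemma Pop_pow (n : ℕ) : Pop (X ^ n : Polynomial ℂ) = ((-1 : ℂ) ^ n) • X ^ n := by
  simp only [Pop, AlgHom.toLinearMap_apply, map_pow, Polynomial.aeval_X]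
  rw [neg_pow, Polynomial.smul_eq_C_mul, map_pow, map_neg, map_one]

lemma Mz_pow (n : ℕ) : Mz (X ^ n : Polynomial ℂ) = X ^ (n + 1) := by
  simp [Mz, pow_succ, mul_comm]

lemma Dop_pow (n : ℕ) : Dop (X ^ n : Polynomial ℂ) = (n : ℂ) • X ^ (n - 1) := by
  simp [Dop, Polynomial.derivative_X_pow, Polynomial.smul_eq_C_mul]

lemma Delta_pow (n : ℕ) :
    DeltaOp (X ^ n : Polynomial ℂ) = (1 - (-1 : ℂ) ^ n) • X ^ (n - 1) := by
  show ((X ^ n : Polynomial ℂ) - (X ^ n).comp (-X)).divX = _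
  rw [Polynomial.pow_comp, Polynomial.X_comp, neg_pow]
  have : (X ^ n : Polynomial ℂ) - (-1 : Polynomial ℂ) ^ n * X ^ n
      = Polynomial.C (1 - (-1 : ℂ) ^ n) * X ^ n := by
    simp only [map_sub, map_pow, map_neg, map_one]
    ring
  rw [this, Polynomial.divX_C_mul, Polynomial.divX_X_pow, ← Polynomial.smul_eq_C_mul]
  cases n with
  | zero => simp
  | succ m => simp

lemma end_ext {f g : Module.End ℂ (Polynomial ℂ)}
    (h : ∀ n : ℕ, f (X ^ n) = g (X ^ n)) : f = g := by
  apply Polynomial.lhom_ext'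
  intro n
  apply LinearMap.ext
  intro a
  simp only [LinearMap.comp_apply, ← Polynomial.smul_X_eq_monomial, map_smul, h n]

end Aux

/-- Dunkl-type realization of `A_λ` on `ℂ[z]`: the operators `ρ₊`, `ρ₋`, `P`
satisfy `ρ₊ρ₋ − ρ₋ρ₊ = −(1/4)·id + λ·P`, `ρ₊P = −Pρ₊`, `ρ₋P = −Pρ₋`, `P² = id`. -/
theorem dunkl_representation (lam : ℂ) :
    rhoP lam ∘ₗ rhoM - rhoM ∘ₗ rhoP lam =
        (-(1 / 4 : ℂ)) • (LinearMap.id : Module.End ℂ (Polynomial ℂ)) + lam • Pop ∧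
      rhoP lam ∘ₗ Pop = -(Pop ∘ₗ rhoP lam) ∧
      rhoM ∘ₗ Pop = -(Pop ∘ₗ rhoM) ∧
      Pop ∘ₗ Pop = (LinearMap.id : Module.End ℂ (Polynomial ℂ)) := by
  refine ⟨?_, ?_, ?_, ?_⟩
  · apply end_ext
    intro n
    cases n with
    | zero =>
      simp only [rhoP, rhoM, LinearMap.sub_apply, LinearMap.comp_apply, LinearMap.add_apply,
        LinearMap.neg_apply, LinearMap.smul_apply, LinearMap.id_apply, map_smul, map_neg,
        map_sub, Mz_pow, Dop_pow, Delta_pow, Pop_pow, Nat.add_sub_cancel, Nat.zero_sub,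
        Nat.sub_self]
      match_scalars <;> push_cast <;> ring
    | succ m =>
      simp only [rhoP, rhoM, LinearMap.sub_apply, LinearMap.comp_apply, LinearMap.add_apply,
        LinearMap.neg_apply, LinearMap.smul_apply, LinearMap.id_apply, map_smul, map_neg,
        map_sub, Mz_pow, Dop_pow, Delta_pow, Pop_pow, Nat.add_sub_cancel]
      have e2 : ((-1:ℂ))^(m+1+1) = (-1:ℂ)^m := by rw [pow_succ, pow_succ]; ring
      have e1 : ((-1:ℂ))^(m+1) = -(-1:ℂ)^m := by rw [pow_succ]; ring
      simp only [e2, e1]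
      match_scalars <;> push_cast <;> ring
  · apply end_ext
    intro n
    cases n with
    | zero =>
      simp only [rhoP, LinearMap.comp_apply, LinearMap.neg_apply, LinearMap.sub_apply,
        LinearMap.smul_apply, map_smul, map_sub, Pop_pow, Dop_pow, Delta_pow, Nat.sub_self]
      match_scalars <;> push_cast <;> ring
    | succ m =>
      simp only [rhoP, LinearMap.comp_apply, LinearMap.neg_apply, LinearMap.sub_apply,
        LinearMap.smul_apply, map_smul, map_sub, Pop_pow, Dop_pow, Delta_pow, Nat.add_sub_cancel]
      have e1 : ((-1:ℂ))^(m+1) = -(-1:ℂ)^m := by rw [pow_succ]; ring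
      simp only [e1]
      match_scalars <;> push_cast <;> ring
  · apply end_ext
    intro n
    simp only [rhoM, LinearMap.comp_apply, LinearMap.neg_apply, LinearMap.smul_apply,
      map_smul, map_neg, Mz_pow, Pop_pow]
    have e1 : ((-1:ℂ))^(n+1) = -(-1:ℂ)^n := by rw [pow_succ]; ring
    simp only [e1]
    match_scalars <;> ring
  · apply end_ext
    intro n
    simp only [LinearMap.comp_apply, LinearMap.id_apply, map_smul, Pop_pow, smul_smul,
      ← mul_pow]
    norm_num
end

section
/- Irreducibility of the Dunkl-type representation: if λ ∈ ℂ satisfies λ ≠ (2m+1)/4 for every m ∈ ℕ (equivalently λ ≠ h + 1/4 for every h with 2h ∈ ℕ), then the only ℂ-subspaces of Polynomial ℂ that are invariant under all three operators ρ₊, ρ₋, and P are the zero subspace and the whole space. -/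
open Polynomial

set_option maxRecDepth 10000

lemma coeff_comp_neg_X' (h : Polynomial ℂ) (k : ℕ) :
    (h.comp (-X)).coeff k = (-1)^k * h.coeff k := by
  induction h using Polynomial.induction_on' with
  | add p q hp hq => simp [add_comp, coeff_add, hp, hq, mul_add]
  | monomial n a =>
    have : ((-X : ℂ[X]))^n = C ((-1)^n) * X^n := by
      rw [neg_pow]; simp [C_pow]
    rw [monomial_comp, this, ← mul_assoc, ← C_mul, coeff_C_mul, coeff_X_pow,
      coeff_monomial]
    rcases eq_or_ne k n with rfl | hk
    · simp [mul_comm]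
    · simp [hk, Ne.symm hk]

lemma rhoP_coeff' (lam : ℂ) (h : Polynomial ℂ) (k : ℕ) :
    (rhoP lam h).coeff k
      = (((k + 1 : ℕ) : ℂ) / 2 - lam * (1 - (-1) ^ (k + 1))) * h.coeff (k + 1) := by
  have hD : (DeltaOp h) = (h - h.comp (-(X : Polynomial ℂ))).divX := rfl
  simp only [rhoP, LinearMap.sub_apply, LinearMap.smul_apply, coeff_sub, coeff_smul,
    smul_eq_mul, hD, Dop, coeff_divX, coeff_derivative, coeff_sub, coeff_comp_neg_X']
  push_cast
  ring

lemma factor_ne_zero (lam : ℂ) (hlam : ∀ m : ℕ, lam ≠ ((2 * m + 1 : ℕ) : ℂ) / 4)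
    (n : ℕ) : (((n + 1 : ℕ) : ℂ) / 2 - lam * (1 - (-1) ^ (n + 1))) ≠ 0 := by
  rcases Nat.even_or_odd (n + 1) with he | ho
  · rw [he.neg_one_pow]
    simp only [sub_self, mul_zero, sub_zero]
    have : ((n + 1 : ℕ) : ℂ) ≠ 0 := by exact_mod_cast Nat.succ_ne_zero n
    intro hc
    apply this
    push_cast
    field_simp at hc
    push_cast at hc
    linear_combination hc
  · obtain ⟨j, hj⟩ := ho
    rw [Odd.neg_one_pow ⟨j, hj⟩]
    intro hc
    apply hlam j
    have hn : ((n + 1 : ℕ) : ℂ) = ((2 * j + 1 : ℕ) : ℂ) := by rw [hj]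
    rw [hn] at hc
    have : lam * 2 = ((2 * j + 1 : ℕ) : ℂ) / 2 := by linear_combination -hc
    field_simp at this ⊢
    linear_combination this


/-- Irreducibility of the Dunkl-type representation: if `λ ≠ (2m+1)/4` for every
`m ∈ ℕ` (i.e. `λ ≠ h + 1/4` for every `h` with `2h ∈ ℕ`), then the only
ℂ-subspaces of `ℂ[z]` invariant under `ρ₊`, `ρ₋`, and `P` are `⊥` and `⊤`. -/
theorem dunkl_irreducible (lam : ℂ)
    (hlam : ∀ m : ℕ, lam ≠ ((2 * m + 1 : ℕ) : ℂ) / 4) :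
    ∀ W : Submodule ℂ (Polynomial ℂ),
      (∀ h ∈ W, rhoP lam h ∈ W) → (∀ h ∈ W, rhoM h ∈ W) → (∀ h ∈ W, Pop h ∈ W) →
      W = ⊥ ∨ W = ⊤ := by
  intro W hWp hWm _
  by_cases hbot : W = ⊥
  · exact Or.inl hbot
  right
  obtain ⟨h0, h0W, h0ne⟩ := Submodule.exists_mem_ne_zero_of_ne_bot hbot
  -- Step 1: 1 ∈ W
  have key : ∀ n : ℕ, ∀ h : Polynomial ℂ, h ∈ W → h ≠ 0 → h.natDegree ≤ n →
      (1 : Polynomial ℂ) ∈ W := by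
    intro n
    induction n with
    | zero =>
      intro h hW hne hdeg
      set c := h.coeff 0 with hc0
      have hC : h = C c := eq_C_of_natDegree_le_zero hdeg
      have hc : c ≠ 0 := fun hcc => hne (by rw [hC, hcc, C_0])
      have hmem := W.smul_mem c⁻¹ hW
      have heq : c⁻¹ • h = 1 := by
        rw [hC, smul_C, smul_eq_mul, inv_mul_cancel₀ hc, C_1]
      rwa [heq] at hmem
    | succ n ih =>
      intro h hW hne hdeg
      rcases le_or_gt h.natDegree n with hle | hlt
      · exact ih h hW hne hle
      have hd : h.natDegree = n + 1 := le_antisymm hdeg hlt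
      have ha := factor_ne_zero lam hlam n
      have hcoeff : (rhoP lam h).coeff n
          = (((n + 1 : ℕ) : ℂ) / 2 - lam * (1 - (-1) ^ (n + 1))) * h.leadingCoeff := by
        rw [rhoP_coeff', Polynomial.leadingCoeff, hd]
      have hne' : rhoP lam h ≠ 0 := by
        intro h0
        have hz : (((n + 1 : ℕ) : ℂ) / 2 - lam * (1 - (-1) ^ (n + 1)))
            * h.leadingCoeff = 0 := by rw [← hcoeff, h0, coeff_zero]
        exact (mul_ne_zero ha (leadingCoeff_ne_zero.mpr hne)) hz
      have hdeg' : (rhoP lam h).natDegree ≤ n := by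
        apply natDegree_le_iff_coeff_eq_zero.mpr
        intro m hm
        rw [rhoP_coeff', coeff_eq_zero_of_natDegree_lt (by omega), mul_zero]
      exact ih _ (hWp h hW) hne' hdeg'
  have hone : (1 : Polynomial ℂ) ∈ W := key h0.natDegree h0 h0W h0ne le_rfl
  -- Step 2: X^n ∈ W
  have hXn : ∀ n : ℕ, (X : Polynomial ℂ) ^ n ∈ W := by
    intro n
    induction n with
    | zero => simpa using hone
    | succ n ih =>
      have hmem := W.smul_mem (-2 : ℂ) (hWm _ ih)
      have heq : (-2 : ℂ) • rhoM ((X : Polynomial ℂ) ^ n) = X ^ (n + 1) := by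
        have hrm : rhoM ((X : Polynomial ℂ) ^ n)
            = -((1 / 2 : ℂ) • ((X : Polynomial ℂ) * X ^ n)) := rfl
        rw [hrm, smul_neg, smul_smul, pow_succ, mul_comm (X : Polynomial ℂ)]
        norm_num
      rwa [heq] at hmem
  -- Step 3
  rw [eq_top_iff]
  intro p hp
  clear hp
  induction p using Polynomial.induction_on' with
  | add p q hp hq => exact W.add_mem hp hq
  | monomial m a =>
    rw [← C_mul_X_pow_eq_monomial, ← smul_eq_C_mul]
    exact W.smul_mem a (hXn m)
end
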